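/- The Fréchet derivative Dh of the diagonal Nemytskii operator is Lipschitz: ‖Dh(u) - Dh(v)‖_{L(ℓ², L₂(ℓ²))} ≤ M_h ‖u - v‖ for all u, v ∈ ℓ², and uniformly bounded: ‖Dh(u)‖ ≤ D_h. -/

import Mathlib

open Real

lemma aux13 (c : ℤ → ℝ) (z : lp (fun _ : ℤ => ℝ) 2) (C : ℝ) (hC : 0 ≤ C)
    (hc : ∀ i, |c i| ≤ C) :
    Real.sqrt (∑' i : ℤ, (c i * z i) ^ 2) ≤ C * ‖z‖ := by
  have htwo : (0 : ℝ) < (2 : ENNReal).toReal := by norm_num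
  have hz2 : Summable fun i : ℤ => ‖z i‖ ^ (2 : ENNReal).toReal :=
    (lp.memℓp z).summable htwo
  have hz2' : Summable fun i : ℤ => (z i) ^ 2 := by
    apply hz2.congr
    intro i
    rw [show ((2:ENNReal).toReal) = ((2:ℕ):ℝ) by norm_num, Real.norm_eq_abs,
      Real.rpow_natCast, sq_abs]
  have hle : ∀ i : ℤ, (c i * z i) ^ 2 ≤ C ^ 2 * (z i) ^ 2 := by
    intro i
    rw [mul_pow, ← mul_pow (C)]
    have : (c i) ^ 2 ≤ C ^ 2 := by
      rw [← sq_abs (c i)]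
      exact pow_le_pow_left₀ (abs_nonneg _) (hc i) 2
    nlinarith [sq_nonneg (z i)]
  have hsum_le : (∑' i : ℤ, (c i * z i) ^ 2) ≤ C ^ 2 * ∑' i : ℤ, (z i) ^ 2 := by
    rw [← tsum_mul_left]
    refine Summable.tsum_le_tsum hle ?_ (hz2'.mul_left _)
    exact Summable.of_nonneg_of_le (fun i => sq_nonneg _) hle (hz2'.mul_left _)
  have hnorm : Real.sqrt (∑' i : ℤ, (z i) ^ 2) = ‖z‖ := by
    have := lp.norm_rpow_eq_tsum htwo z
    rw [ENNReal.toReal_ofNat] at this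
    rw [show ∑' i : ℤ, (z i) ^ 2 = ∑' i : ℤ, ‖z i‖ ^ (2 : ℝ) by
        refine tsum_congr fun i => ?_
        rw [Real.norm_eq_abs, show (2:ℝ) = ((2:ℕ):ℝ) by norm_num,
          Real.rpow_natCast, sq_abs],
      ← this]
    rw [show ‖z‖ ^ (2 : ℝ) = ‖z‖ ^ (2 : ℕ) by
        rw [← Real.rpow_natCast ‖z‖ 2]; norm_num]
    exact Real.sqrt_sq (norm_nonneg _)
  calc Real.sqrt (∑' i : ℤ, (c i * z i) ^ 2)
      ≤ Real.sqrt (C ^ 2 * ∑' i : ℤ, (z i) ^ 2) := Real.sqrt_le_sqrt hsum_le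
    _ = C * ‖z‖ := by
        rw [Real.sqrt_mul (sq_nonneg _), Real.sqrt_sq hC, hnorm]

theorem stmt13 (h : ℤ → ℝ → ℝ) (Dh Mh : ℝ) (hDh : 0 ≤ Dh) (hMh : 0 ≤ Mh)
    (hC2 : ∀ i : ℤ, ContDiff ℝ 2 (h i))
    (hder : ∀ i : ℤ, ∀ ζ : ℝ, |deriv (h i) ζ| ≤ Dh)
    (hder2 : ∀ i : ℤ, ∀ ζ : ℝ, |deriv (deriv (h i)) ζ| ≤ Mh) :
    ∀ u v z : lp (fun _ : ℤ => ℝ) 2, ‖z‖ ≤ 1 →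
      Real.sqrt (∑' i : ℤ, (deriv (h i) (u i) * z i) ^ 2) ≤ Dh ∧
      Real.sqrt (∑' i : ℤ, ((deriv (h i) (u i) - deriv (h i) (v i)) * z i) ^ 2) ≤
        Mh * ‖u - v‖ := by
  intro u v z hz
  constructor
  · calc Real.sqrt (∑' i : ℤ, (deriv (h i) (u i) * z i) ^ 2)
        ≤ Dh * ‖z‖ := aux13 _ z Dh hDh fun i => hder i (u i)
      _ ≤ Dh * 1 := by nlinarith [norm_nonneg z]
      _ = Dh := mul_one Dh
  · -- Lipschitz bound on c i
    have hlip : ∀ i : ℤ, |deriv (h i) (u i) - deriv (h i) (v i)| ≤ Mh * ‖u - v‖ := by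
      intro i
      have hdiff : ∀ x ∈ (Set.univ : Set ℝ), DifferentiableAt ℝ (deriv (h i)) x := by
        intro x _
        have h1 : ContDiff ℝ 1 (deriv (h i)) := by
          have := (contDiff_succ_iff_deriv (n := 1)).mp (by
            have := hC2 i; norm_num at this ⊢; exact this)
          exact this.2.2
        exact (h1.differentiable one_ne_zero).differentiableAt
      have := Convex.norm_image_sub_le_of_norm_deriv_le
        (fun x hx => hdiff x hx)
        (fun x _ => by simpa using hder2 i x)
        convex_univ (Set.mem_univ (v i)) (Set.mem_univ (u i))
      have hui : |u i - v i| ≤ ‖u - v‖ := by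
        have := lp.norm_apply_le_norm (by norm_num : (2 : ENNReal) ≠ 0) (u - v) i
        simpa [lp.coeFn_sub, Real.norm_eq_abs] using this
      calc |deriv (h i) (u i) - deriv (h i) (v i)| ≤ Mh * |u i - v i| := by
            simpa [Real.norm_eq_abs] using this
        _ ≤ Mh * ‖u - v‖ := by nlinarith [abs_nonneg (u i - v i)]
    have := aux13 (fun i => deriv (h i) (u i) - deriv (h i) (v i)) z (Mh * ‖u - v‖)
      (mul_nonneg hMh (norm_nonneg _)) hlip
    calc Real.sqrt (∑' i : ℤ, ((deriv (h i) (u i) - deriv (h i) (v i)) * z i) ^ 2)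
        ≤ Mh * ‖u - v‖ * ‖z‖ := this
      _ ≤ Mh * ‖u - v‖ * 1 := by nlinarith [norm_nonneg z, mul_nonneg hMh (norm_nonneg (u - v))]
      _ = Mh * ‖u - v‖ := mul_one _
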